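/- Let Θ be a topological space, f : Θ → ℝ continuous, and c₀ ∈ ℝ. Let A and B be two distinct connected components of the strict sublevel set {θ ∈ Θ : f(θ) < c₀} that are both contained in the same connected component of Θ_{f ≤ c₀} = {θ : f(θ) ≤ c₀}. Suppose p₁ ∈ A satisfies f(θ) ≥ f(p₁) for all θ ∈ A, and suppose there exists p₂ ∈ B with f(p₂) < f(p₁). Then: (i) for every c with f(p₁) ≤ c < c₀, every point θ of the connected component of p₁ in Θ_{f ≤ c} satisfies f(θ) ≥ f(p₁), i.e., p₁ is a minimum of f on its connected component of Θ_{f ≤ c}; and (ii) the connected component of p₁ in Θ_{f ≤ c₀} contains a point θ with f(θ) < f(p₁). In other words, p₁ appears as a new minimum in the set of minima of f on connected components of Θ_{f ≤ c} precisely when c decreases below c₀. -/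
import Mathlib

/-- **A 1-saddle gives birth (going downwards) to a new minimum on connected components
of sublevel sets.**  Let `A` and `B` be the (distinct) connected components of `p₁` and
`p₂` in the strict sublevel set `{f < c₀}`, both contained in the same connected
component of the closed sublevel set `{f ≤ c₀}`.  Suppose `p₁` is a minimum point of `f`
on `A` and `f p₂ < f p₁`.  Then (i) for every `c` with `f p₁ ≤ c < c₀`, the point `p₁`
is a minimum of `f` on its connected component in `{f ≤ c}`; and (ii) the connected
component of `p₁` in `{f ≤ c₀}` contains a point of strictly smaller value than `f p₁`. -/
theorem new_minimum_appears_below_saddle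
    {Θ : Type*} [TopologicalSpace Θ] (f : Θ → ℝ) (hf : Continuous f) (c₀ : ℝ)
    (p₁ p₂ : Θ) (hp₁ : f p₁ < c₀) (hp₂ : f p₂ < c₀)
    (hdistinct : connectedComponentIn {θ : Θ | f θ < c₀} p₁ ≠
      connectedComponentIn {θ : Θ | f θ < c₀} p₂)
    (hsame : connectedComponentIn {θ : Θ | f θ ≤ c₀} p₁ =
      connectedComponentIn {θ : Θ | f θ ≤ c₀} p₂)
    (hmin : ∀ θ ∈ connectedComponentIn {θ : Θ | f θ < c₀} p₁, f p₁ ≤ f θ)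
    (hlow : f p₂ < f p₁) :
    (∀ c : ℝ, f p₁ ≤ c → c < c₀ →
      ∀ θ ∈ connectedComponentIn {x : Θ | f x ≤ c} p₁, f p₁ ≤ f θ) ∧
    (∃ θ ∈ connectedComponentIn {x : Θ | f x ≤ c₀} p₁, f θ < f p₁) := by
  constructor
  · intro c hc₁ hc₂ θ hθ
    apply hmin
    have hsub : connectedComponentIn {x : Θ | f x ≤ c} p₁ ⊆ {θ : Θ | f θ < c₀} := by
      intro x hx
      exact lt_of_le_of_lt (connectedComponentIn_subset {x : Θ | f x ≤ c} p₁ hx) hc₂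
    exact (isPreconnected_connectedComponentIn (x := p₁) (F := {x : Θ | f x ≤ c})).subset_connectedComponentIn
      (mem_connectedComponentIn hc₁) hsub hθ
  · refine ⟨p₂, ?_, hlow⟩
    rw [hsame]
    exact mem_connectedComponentIn hp₂.le
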